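/- Under a full subsidy, the freight forwarder's optimal driven distance does not depend on the tax rate: if X is a set of feasible routing solutions and, for i = 1,2, the pair (dᵢ,fᵢ) ∈ X is lower-level optimal for the policy (sᵢ,tᵢ) with s₁ = s₂ = 1 and t₁, t₂ ≥ 0, then d₁ = d₂. -/
import Mathlib

/-- Under a full subsidy the optimal driven distance does not depend
on the tax rate: if `(dᵢ,fᵢ) ∈ X` is lower-level optimal for `(sᵢ,tᵢ)` with
`s₁ = s₂ = 1` and `t₁, t₂ ≥ 0`, then `d₁ = d₂`. -/
theorem stmt10 (X : Set (ℝ × ℝ)) (hX : X.Nonempty)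
    (hXnn : ∀ p ∈ X, 0 ≤ p.1 ∧ 0 ≤ p.2)
    (s₁ t₁ d₁ f₁ s₂ t₂ d₂ f₂ : ℝ)
    (hs₁ : s₁ = 1) (hs₂ : s₂ = 1)
    (ht₁ : 0 ≤ t₁) (ht₂ : 0 ≤ t₂)
    (hmem₁ : (d₁, f₁) ∈ X)
    (hopt₁ : ∀ p ∈ X,
      (1 + t₁) * d₁ + (1 - s₁) * f₁ ≤ (1 + t₁) * p.1 + (1 - s₁) * p.2)
    (hmem₂ : (d₂, f₂) ∈ X)
    (hopt₂ : ∀ p ∈ X,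
      (1 + t₂) * d₂ + (1 - s₂) * f₂ ≤ (1 + t₂) * p.1 + (1 - s₂) * p.2) :
    d₁ = d₂ := by
  have h1 := hopt₁ (d₂, f₂) hmem₂
  have h2 := hopt₂ (d₁, f₁) hmem₁
  subst hs₁ hs₂
  simp only [sub_self, zero_mul, add_zero] at h1 h2
  have p1 : (0:ℝ) < 1 + t₁ := by linarith
  have p2 : (0:ℝ) < 1 + t₂ := by linarith
  have := le_of_mul_le_mul_left h1 p1
  have := le_of_mul_le_mul_left h2 p2
  linarith
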